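/- Let X = Y ⊕ ℝh, Ω ⊆ X open convex, with slice functions g (convex, finite) and f (concave, finite) on Ω_h, so that Ω = {y + t h : y ∈ Ω_h, g(y) < t < f(y)}. Then the topological boundary of Ω decomposes as ∂Ω = Γ(f, Ω_h) ∪ Γ(g, Ω_h) ∪ N where Γ(f, Ω_h) = {y + f(y)h : y ∈ Ω_h}, Γ(g, Ω_h) = {y + g(y)h : y ∈ Ω_h}, N = ∂Ω ∩ ∂C with C = Ω_h ⊕ ℝh, and the three sets are pairwise disjoint. Moreover ∂Ω ∩ C = Γ(f, Ω_h) ∪ Γ(g, Ω_h). -/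

import Mathlib

/-- Let `Ω ⊆ X = Y ⊕ ℝh` (`Y = ker h*`, `h*(h) = 1`) be a nonempty open
convex set with finite slice functions `g(y) = inf {t : y + t h ∈ Ω}` (convex) and
`f(y) = sup {t : y + t h ∈ Ω}` (concave) on `Ω_h = {y ∈ Y : ∃ t, y + t h ∈ Ω}`. Let
`Γ(f, Ω_h) = {y + f(y) h : y ∈ Ω_h}`, `Γ(g, Ω_h) = {y + g(y) h : y ∈ Ω_h}`, let
`C = Ω_h ⊕ ℝh` be the open cylinder over `Ω_h`, and `N = ∂Ω ∩ ∂C`. Then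
`∂Ω = Γ(f, Ω_h) ∪ Γ(g, Ω_h) ∪ N`, the three sets are pairwise disjoint, and
`∂Ω ∩ C = Γ(f, Ω_h) ∪ Γ(g, Ω_h)`. -/
theorem boundary_decomposition_of_open_convex
    {X : Type*} [NormedAddCommGroup X] [NormedSpace ℝ X]
    (hstar : X →L[ℝ] ℝ) (h : X) (hh : hstar h = 1)
    (Ω : Set X) (hΩopen : IsOpen Ω) (hΩconv : Convex ℝ Ω) (hΩne : Ω.Nonempty)
    (hbddAbove : ∀ y : X, (hstar y = 0 ∧ ∃ t : ℝ, y + t • h ∈ Ω) →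
      BddAbove {t : ℝ | y + t • h ∈ Ω})
    (hbddBelow : ∀ y : X, (hstar y = 0 ∧ ∃ t : ℝ, y + t • h ∈ Ω) →
      BddBelow {t : ℝ | y + t • h ∈ Ω}) :
    let Ωh : Set X := {y : X | hstar y = 0 ∧ ∃ t : ℝ, y + t • h ∈ Ω}
    let f : X → ℝ := fun y => sSup {t : ℝ | y + t • h ∈ Ω}
    let g : X → ℝ := fun y => sInf {t : ℝ | y + t • h ∈ Ω}
    let Γf : Set X := (fun y => y + f y • h) '' Ωh
    let Γg : Set X := (fun y => y + g y • h) '' Ωh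
    let C : Set X := {x : X | ∃ y ∈ Ωh, ∃ t : ℝ, x = y + t • h}
    let N : Set X := frontier Ω ∩ frontier C
    frontier Ω = Γf ∪ Γg ∪ N ∧
      Disjoint Γf Γg ∧ Disjoint Γf N ∧ Disjoint Γg N ∧
      frontier Ω ∩ C = Γf ∪ Γg := by
  intro Ωh f g Γf Γg C N
  have hcont : ∀ y : X, Continuous (fun t : ℝ => y + t • h) := fun y =>
    continuous_const.add (continuous_id.smul continuous_const)
  have hSopen : ∀ y : X, IsOpen {t : ℝ | y + t • h ∈ Ω} := fun y =>
    hΩopen.preimage (hcont y)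
  have hkey : ∀ (y : X) (a b μ ν : ℝ), μ + ν = 1 →
      y + (μ * a + ν * b) • h = μ • (y + a • h) + ν • (y + b • h) := by
    intro y a b μ ν hμν
    have hν : ν = 1 - μ := by linarith
    subst hν
    module
  have hSconv : ∀ y : X, Convex ℝ {t : ℝ | y + t • h ∈ Ω} := by
    intro y a ha b hb μ ν hμ hν hμν
    have := hΩconv ha hb hμ hν hμν
    simpa [smul_eq_mul, hkey y a b μ ν hμν] using this
  -- For y ∈ Ωh, the slice is the open interval (g y, f y)
  have hgf : ∀ y ∈ Ωh, g y < f y := by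
    intro y hy
    obtain ⟨t, ht⟩ := hy.2
    obtain ⟨ε, hε, hball⟩ := Metric.isOpen_iff.1 (hSopen y) t ht
    rw [Real.ball_eq_Ioo] at hball
    have h1 : t - ε / 2 ∈ {s : ℝ | y + s • h ∈ Ω} :=
      hball ⟨by linarith, by linarith⟩
    have h2 : t + ε / 2 ∈ {s : ℝ | y + s • h ∈ Ω} :=
      hball ⟨by linarith, by linarith⟩
    calc g y ≤ t - ε / 2 := csInf_le (hbddBelow y hy) h1
    _ < t + ε / 2 := by linarith
    _ ≤ f y := le_csSup (hbddAbove y hy) h2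
  have hSIoo : ∀ y ∈ Ωh, {t : ℝ | y + t • h ∈ Ω} = Set.Ioo (g y) (f y) := by
    intro y hy
    ext t
    constructor
    · intro ht
      obtain ⟨ε, hε, hball⟩ := Metric.isOpen_iff.1 (hSopen y) t ht
      rw [Real.ball_eq_Ioo] at hball
      have h1 : t - ε / 2 ∈ {s : ℝ | y + s • h ∈ Ω} :=
        hball ⟨by linarith, by linarith⟩
      have h2 : t + ε / 2 ∈ {s : ℝ | y + s • h ∈ Ω} :=
        hball ⟨by linarith, by linarith⟩
      have hl : g y ≤ t - ε / 2 := csInf_le (hbddBelow y hy) h1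
      have hr : t + ε / 2 ≤ f y := le_csSup (hbddAbove y hy) h2
      exact ⟨by linarith, by linarith⟩
    · rintro ⟨h1, h2⟩
      obtain ⟨a, haS, hat⟩ := exists_lt_of_csInf_lt hy.2 h1
      obtain ⟨b, hbS, htb⟩ := exists_lt_of_lt_csSup hy.2 h2
      exact ((hSconv y).ordConnected.out haS hbS) ⟨hat.le, htb.le⟩
  -- decomposition of points: π x = x - hstar x • h
  have hπ : ∀ x : X, hstar (x - hstar x • h) = 0 := by
    intro x; simp [hh]
  have hπx : ∀ x : X, (x - hstar x • h) + hstar x • h = x := fun x => by abel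
  -- C is the union of translates of Ω
  have hCalt : ∀ x : X, x ∈ C ↔ ∃ t : ℝ, x + t • h ∈ Ω := by
    intro x
    constructor
    · rintro ⟨y, hy, s, rfl⟩
      obtain ⟨t, ht⟩ := hy.2
      refine ⟨t - s, ?_⟩
      have he : y + s • h + (t - s) • h = y + t • h := by module
      rw [he]; exact ht
    · rintro ⟨t, ht⟩
      refine ⟨x - hstar x • h, ⟨hπ x, ⟨hstar x + t, ?_⟩⟩, hstar x, (hπx x).symm⟩
      have he : x - hstar x • h + (hstar x + t) • h = x + t • h := by module
      rw [he]; exact ht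
  have hCopen : IsOpen C := by
    have he : C = ⋃ t : ℝ, (fun x => x + t • h) ⁻¹' Ω := by
      ext x; simp [hCalt x]
    rw [he]
    exact isOpen_iUnion fun t => hΩopen.preimage (continuous_id.add continuous_const)
  have hΩC : Ω ⊆ C := by
    intro x hx
    exact (hCalt x).2 ⟨0, by simpa using hx⟩
  -- canonical decomposition of points of C
  have hCdec : ∀ x ∈ C, (x - hstar x • h) ∈ Ωh := by
    rintro x ⟨y, hy, s, rfl⟩
    have hsx : hstar (y + s • h) = s := by simp [hy.1, hh]
    have hyx : (y + s • h) - hstar (y + s • h) • h = y := by rw [hsx]; abel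
    rw [hyx]; exact hy
  -- Γf and Γg are in frontier Ω ∩ C
  have hΓfC : Γf ⊆ C := by rintro x ⟨y, hy, rfl⟩; exact ⟨y, hy, f y, rfl⟩
  have hΓgC : Γg ⊆ C := by rintro x ⟨y, hy, rfl⟩; exact ⟨y, hy, g y, rfl⟩
  have hclosS : ∀ y ∈ Ωh, ∀ t ∈ Set.Icc (g y) (f y), y + t • h ∈ closure Ω := by
    intro y hy t ht
    have h1 : t ∈ closure {s : ℝ | y + s • h ∈ Ω} := by
      rw [hSIoo y hy, closure_Ioo (hgf y hy).ne]
      exact ht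
    have h2 : (fun s : ℝ => y + s • h) '' closure {s : ℝ | y + s • h ∈ Ω} ⊆
        closure ((fun s : ℝ => y + s • h) '' {s : ℝ | y + s • h ∈ Ω}) :=
      image_closure_subset_closure_image (hcont y)
    have h3 : (fun s : ℝ => y + s • h) '' {s : ℝ | y + s • h ∈ Ω} ⊆ Ω := by
      rintro _ ⟨s, hs, rfl⟩; exact hs
    exact closure_mono h3 (h2 ⟨t, h1, rfl⟩)
  have hΓf_front : Γf ⊆ frontier Ω := by
    rintro x ⟨y, hy, rfl⟩
    rw [hΩopen.frontier_eq]
    refine ⟨hclosS y hy (f y) ⟨(hgf y hy).le, le_rfl⟩, ?_⟩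
    intro hmem
    have hm : f y ∈ Set.Ioo (g y) (f y) := by rw [← hSIoo y hy]; exact hmem
    exact lt_irrefl _ hm.2
  have hΓg_front : Γg ⊆ frontier Ω := by
    rintro x ⟨y, hy, rfl⟩
    rw [hΩopen.frontier_eq]
    refine ⟨hclosS y hy (g y) ⟨le_rfl, (hgf y hy).le⟩, ?_⟩
    intro hmem
    have hm : g y ∈ Set.Ioo (g y) (f y) := by rw [← hSIoo y hy]; exact hmem
    exact lt_irrefl _ hm.1
  -- frontier Ω ∩ C ⊆ Γf ∪ Γg
  have hmain : frontier Ω ∩ C ⊆ Γf ∪ Γg := by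
    rintro x ⟨hxf, hxC⟩
    set y := x - hstar x • h with hydef
    set t := hstar x with htdef
    have hy : y ∈ Ωh := hCdec x hxC
    have hxyt : x = y + t • h := (hπx x).symm
    have hxcl : x ∈ closure Ω := hxf.1
    have hxΩ : x ∉ Ω := by
      rw [hΩopen.frontier_eq] at hxf; exact hxf.2
    have hxS : t ∉ Set.Ioo (g y) (f y) := by
      intro hmem
      rw [← hSIoo y hy] at hmem
      exact hxΩ (by rw [hxyt]; exact hmem)
    obtain ⟨s, hs⟩ := hy.2
    have hsIoo : s ∈ Set.Ioo (g y) (f y) := by rw [← hSIoo y hy]; exact hs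
    have hzint : y + s • h ∈ interior Ω := by rw [hΩopen.interior_eq]; exact hs
    have hcombo : ∀ a b : ℝ, 0 < a → 0 ≤ b → a + b = 1 →
        a * s + b * t ∈ Set.Ioo (g y) (f y) := by
      intro a b ha hb hab
      have hc := hΩconv.combo_interior_closure_mem_interior hzint hxcl ha hb hab
      rw [hΩopen.interior_eq] at hc
      have hc' : a • (y + s • h) + b • (y + t • h) ∈ Ω := by rw [← hxyt]; exact hc
      rw [← hkey y s t a b hab] at hc'
      rw [← hSIoo y hy]
      exact hc'
    have htle : t ≤ f y := by
      by_contra hlt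
      push_neg at hlt
      have hts : s < t := lt_trans hsIoo.2 hlt
      set a : ℝ := (t - f y) / (2 * (t - s)) with hadef
      have hts' : (0:ℝ) < t - s := by linarith
      have ha : 0 < a := div_pos (by linarith) (by linarith)
      have ha2 : a * (t - s) = (t - f y) / 2 := by
        rw [hadef, div_mul_eq_mul_div, div_eq_div_iff (mul_pos two_pos hts').ne' two_ne_zero]
        ring
      have ha1 : a < 1 := by
        rw [hadef, div_lt_one (by linarith)]
        have hfs : f y > s := hsIoo.2
        linarith
      have hc := hcombo a (1 - a) ha (by linarith) (by ring)
      have hval : a * s + (1 - a) * t = t - a * (t - s) := by ring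
      rw [hval, ha2] at hc
      have := hc.2
      linarith
    have htge : g y ≤ t := by
      by_contra hlt
      push_neg at hlt
      have hts : t < s := lt_trans hlt hsIoo.1
      set a : ℝ := (g y - t) / (2 * (s - t)) with hadef
      have hts' : (0:ℝ) < s - t := by linarith
      have ha : 0 < a := div_pos (by linarith) (by linarith)
      have ha2 : a * (s - t) = (g y - t) / 2 := by
        rw [hadef, div_mul_eq_mul_div, div_eq_div_iff (mul_pos two_pos hts').ne' two_ne_zero]
        ring
      have ha1 : a < 1 := by
        rw [hadef, div_lt_one (by linarith)]
        have hgs : g y < s := hsIoo.1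
        linarith
      have hc := hcombo a (1 - a) ha (by linarith) (by ring)
      have hval : a * s + (1 - a) * t = t + a * (s - t) := by ring
      rw [hval, ha2] at hc
      have := hc.1
      linarith
    rcases eq_or_lt_of_le htle with heq | hlt
    · left; exact ⟨y, hy, by rw [hxyt, heq]⟩
    · rcases eq_or_lt_of_le htge with heq | hlt2
      · right; exact ⟨y, hy, by rw [hxyt, ← heq]⟩
      · exact absurd ⟨hlt2, hlt⟩ hxS
  -- assemble
  have hCdisj : Disjoint C (frontier C) := by
    rw [Set.disjoint_right]
    intro x hx
    rw [hCopen.frontier_eq] at hx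
    exact hx.2
  have hfrCeq : frontier Ω ∩ C = Γf ∪ Γg := by
    apply Set.Subset.antisymm hmain
    intro x hx
    rcases hx with hx | hx
    · exact ⟨hΓf_front hx, hΓfC hx⟩
    · exact ⟨hΓg_front hx, hΓgC hx⟩
  refine ⟨?_, ?_, ?_, ?_, hfrCeq⟩
  · apply Set.Subset.antisymm
    · intro x hx
      by_cases hxC : x ∈ C
      · rcases hmain ⟨hx, hxC⟩ with h' | h'
        · exact Or.inl (Or.inl h')
        · exact Or.inl (Or.inr h')
      · refine Or.inr ⟨hx, ?_⟩
        rw [hCopen.frontier_eq]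
        exact ⟨closure_mono hΩC (frontier_subset_closure hx), hxC⟩
    · rintro x hx
      rcases hx with (h' | h') | h'
      · exact hΓf_front h'
      · exact hΓg_front h'
      · exact h'.1
  · rw [Set.disjoint_left]
    rintro x ⟨y, hy, rfl⟩ hxg
    obtain ⟨y', hy', heq⟩ := hxg
    change y' + g y' • h = y + f y • h at heq
    have hst : hstar (y + f y • h) = f y := by simp [hy.1, hh]
    have hst' : hstar (y' + g y' • h) = g y' := by simp [hy'.1, hh]
    have hfg : g y' = f y := by rw [← hst', heq, hst]
    rw [hfg] at heq
    have hyy : y' = y := add_right_cancel heq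
    subst hyy
    have hlt := hgf y' hy
    linarith
  · rw [Set.disjoint_left]
    intro x hx hxN
    exact (Set.disjoint_left.1 hCdisj) (hΓfC hx) hxN.2
  · rw [Set.disjoint_left]
    intro x hx hxN
    exact (Set.disjoint_left.1 hCdisj) (hΓgC hx) hxN.2
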